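/- Let Γ be a countable group and Δ ≤ Λ ≤ Γ nested subgroups. Suppose that every Δ-invariant real-valued function of conditionally negative type on Γ is bounded on Λ. Then for every ε > 0 there exist a finite subset F ⊆ Γ and δ > 0 such that every normalized Δ-invariant function of positive type φ : Γ → ℂ satisfying |φ(t) − 1| ≤ δ for all t ∈ F satisfies Re(1 − φ(γ)) ≤ ε for all γ ∈ Λ. -/

import Mathlib

open scoped InnerProductSpace ComplexConjugate ComplexOrder BigOperators

section Defs

variable {Γ : Type} [Group Γ]

/-- A complex-valued function of positive type on a group. -/
def IsPosType (φ : Γ → ℂ) : Prop :=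
  ∀ (n : ℕ), 1 ≤ n → ∀ (γ : Fin n → Γ) (c : Fin n → ℂ),
    0 ≤ ∑ i, ∑ j, conj (c i) * c j * φ ((γ i)⁻¹ * γ j)

/-- A real-valued function of positive type on a group. -/
def IsRealPosType (φ : Γ → ℝ) : Prop :=
  (∀ γ : Γ, φ γ⁻¹ = φ γ) ∧
  ∀ (n : ℕ), 1 ≤ n → ∀ (γ : Fin n → Γ) (c : Fin n → ℝ),
    0 ≤ ∑ i, ∑ j, c i * c j * φ ((γ i)⁻¹ * γ j)

/-- A complex-valued function of conditionally negative type on a group. -/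
def IsCondNegType (ψ : Γ → ℂ) : Prop :=
  ψ 1 = 0 ∧ (∀ γ : Γ, ψ γ⁻¹ = conj (ψ γ)) ∧
  ∀ (n : ℕ), 2 ≤ n → ∀ (γ : Fin n → Γ) (c : Fin n → ℂ), (∑ i, c i) = 0 →
    ∑ i, ∑ j, conj (c i) * c j * ψ ((γ i)⁻¹ * γ j) ≤ 0

/-- A real-valued function of conditionally negative type on a group. -/
def IsRealCondNegType (ψ : Γ → ℝ) : Prop :=
  ψ 1 = 0 ∧ (∀ γ : Γ, ψ γ⁻¹ = ψ γ) ∧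
  ∀ (n : ℕ), 2 ≤ n → ∀ (γ : Fin n → Γ) (c : Fin n → ℝ), (∑ i, c i) = 0 →
    ∑ i, ∑ j, c i * c j * ψ ((γ i)⁻¹ * γ j) ≤ 0

/-- A function on Γ is Δ-(bi-)invariant if it is unchanged under left and right
multiplication by elements of Δ. -/
def IsInvariantUnder {α : Type*} (Δ : Subgroup Γ) (ψ : Γ → α) : Prop :=
  ∀ d₀ ∈ Δ, ∀ d₁ ∈ Δ, ∀ γ : Γ, ψ (d₀ * γ * d₁) = ψ γ

/-- The triple Δ ≤ Λ ≤ Γ has property (T): every unitary representation of Γ with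
almost invariant Δ-invariant unit vectors has a Λ-invariant unit vector. -/
def HasPropertyT (Δ Λ : Subgroup Γ) : Prop :=
  ∀ (H : Type) [NormedAddCommGroup H] [InnerProductSpace ℂ H] [CompleteSpace H]
    (π : Γ →* (H ≃ₗᵢ[ℂ] H)),
    (∀ (F : Finset Γ) (ε : ℝ), 0 < ε →
      ∃ ξ : H, ‖ξ‖ = 1 ∧ (∀ d ∈ Δ, π d ξ = ξ) ∧ ∀ γ ∈ F, ‖π γ ξ - ξ‖ ≤ ε) →
    ∃ η : H, ‖η‖ = 1 ∧ ∀ l ∈ Λ, π l η = η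

end Defs


private lemma key2' {Γ : Type} [Group Γ] {φ : Γ → ℂ} (h : IsPosType φ) (g : Γ) (c0 c1 : ℂ) :
    0 ≤ conj c0 * c0 * φ 1 + conj c0 * c1 * φ g + conj c1 * c0 * φ g⁻¹ + conj c1 * c1 * φ 1 := by
  have := h 2 one_le_two ![1, g] ![c0, c1]
  simpa [Fin.sum_univ_two, inv_mul_cancel, mul_one, one_mul, add_assoc] using this

private lemma posType_inv_conj' {Γ : Type} [Group Γ] {φ : Γ → ℂ} (h : IsPosType φ) (g : Γ) :
    φ g⁻¹ = conj (φ g) := by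
  have h1 := (Complex.le_def.mp (key2' h g 1 1)).2
  have h2 := (Complex.le_def.mp (key2' h g 1 Complex.I)).2
  have h0 := (Complex.le_def.mp (key2' h g 1 0)).2
  simp [Complex.add_im, Complex.mul_im, Complex.conj_im, Complex.conj_re] at h0 h1 h2
  apply Complex.ext <;> simp [Complex.conj_re, Complex.conj_im] <;> linarith

private lemma posType_re_le_one' {Γ : Type} [Group Γ] {φ : Γ → ℂ} (h : IsPosType φ)
    (h1 : φ 1 = 1) (g : Γ) : (φ g).re ≤ 1 := by
  have hc := posType_inv_conj' h g
  have h2 := (Complex.le_def.mp (key2' h g 1 (-1))).1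
  simp [h1, hc, Complex.add_re, Complex.conj_re] at h2
  linarith

set_option maxHeartbeats 1000000 in
/-- If every Δ-invariant real-valued function of conditionally negative type
on Γ is bounded on Λ, then for every ε > 0 there is a pair (F, δ) such that any normalized
Δ-invariant function of positive type close to 1 on F is uniformly close to 1 on Λ. -/
theorem stmt4 (Γ : Type) [Group Γ] [Countable Γ] (Δ Λ : Subgroup Γ) (hΔΛ : Δ ≤ Λ)
    (hbdd : ∀ ψ : Γ → ℝ, IsRealCondNegType ψ → IsInvariantUnder Δ ψ →
      ∃ C : ℝ, ∀ l ∈ Λ, |ψ l| ≤ C) :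
    ∀ ε > (0 : ℝ), ∃ (F : Finset Γ) (δ : ℝ), 0 < δ ∧
      ∀ φ : Γ → ℂ, IsPosType φ → φ 1 = 1 → IsInvariantUnder Δ φ →
        (∀ t ∈ F, ‖φ t - 1‖ ≤ δ) →
        ∀ γ ∈ Λ, (1 - φ γ).re ≤ ε := by
  classical
  by_contra hcon
  push_neg at hcon
  obtain ⟨ε, hε, hcon⟩ := hcon
  obtain ⟨e, he⟩ := exists_surjective_nat Γ
  choose φ hpos hone hinv hF g hgΛ hgε using
    fun n : ℕ => hcon ((Finset.range n).image e) ((1/2)^n) (by positivity)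
  set f : ℕ → Γ → ℝ := fun n x => 1 - (φ n x).re with hf
  have f_nonneg : ∀ n x, 0 ≤ f n x := fun n x => by
    have := posType_re_le_one' (hpos n) (hone n) x
    simp only [hf]; linarith
  have f_small : ∀ m n : ℕ, m < n → f n (e m) ≤ (1/2)^n := by
    intro m n hmn
    have ht := hF n (e m) (Finset.mem_image_of_mem e (Finset.mem_range.mpr hmn))
    calc f n (e m) = (1 - φ n (e m)).re := by
          simp [hf, Complex.sub_re, Complex.one_re]
      _ ≤ ‖1 - φ n (e m)‖ := Complex.re_le_norm _
      _ = ‖φ n (e m) - 1‖ := by rw [← norm_neg, neg_sub]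
      _ ≤ (1/2)^n := ht
  have hsummable : ∀ x : Γ, Summable (fun n : ℕ => (n:ℝ) * f n x) := by
    intro x
    obtain ⟨m, rfl⟩ := he x
    rw [← summable_nat_add_iff (m+1)]
    have hb : Summable (fun n : ℕ => ((n + (m+1) : ℕ) : ℝ) * (1/2)^(n + (m+1))) := by
      refine (summable_nat_add_iff (f := fun n : ℕ => (n:ℝ) * (1/2)^n) (m+1)).mpr ?_
      simpa using summable_pow_mul_geometric_of_norm_lt_one 1 (r := ((1:ℝ)/2)) (by
        rw [Real.norm_eq_abs, abs_of_pos (by norm_num : (0:ℝ) < 1/2)]; norm_num)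
    refine Summable.of_nonneg_of_le (fun n => mul_nonneg (Nat.cast_nonneg _) (f_nonneg _ _))
      (fun n => ?_) hb
    exact mul_le_mul_of_nonneg_left (f_small m (n+(m+1)) (by omega)) (Nat.cast_nonneg _)
  have hpt : ∀ (k : ℕ) (n : ℕ), 2 ≤ n → ∀ (γ : Fin n → Γ) (c : Fin n → ℝ), (∑ i, c i) = 0 →
      ∑ i, ∑ j, c i * c j * f k ((γ i)⁻¹ * γ j) ≤ 0 := by
    intro k n hn γ c hc
    have hpos' := hpos k n (by omega) γ (fun i => (c i : ℂ))
    have hre : 0 ≤ (∑ i, ∑ j, conj ((c i : ℂ)) * (c j : ℂ) * φ k ((γ i)⁻¹ * γ j)).re :=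
      (Complex.le_def.mp hpos').1
    have expand : (∑ i, ∑ j, conj ((c i : ℂ)) * (c j : ℂ) * φ k ((γ i)⁻¹ * γ j)).re
        = ∑ i, ∑ j, c i * c j * (φ k ((γ i)⁻¹ * γ j)).re := by
      rw [Complex.re_sum]
      refine Finset.sum_congr rfl fun i _ => ?_
      rw [Complex.re_sum]
      refine Finset.sum_congr rfl fun j _ => ?_
      simp only [Complex.conj_ofReal, Complex.mul_re, Complex.mul_im, Complex.ofReal_re,
        Complex.ofReal_im]
      ring
    have hsplit : ∑ i, ∑ j, c i * c j * f k ((γ i)⁻¹ * γ j)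
        = - ∑ i, ∑ j, c i * c j * (φ k ((γ i)⁻¹ * γ j)).re := by
      simp only [hf, mul_sub, mul_one, Finset.sum_sub_distrib, ← Finset.mul_sum,
        ← Finset.sum_mul, hc, zero_mul, zero_sub]
    rw [hsplit, ← expand]
    linarith
  set ψ : Γ → ℝ := fun x => ∑' n : ℕ, (n:ℝ) * f n x with hψ
  have hcnd : IsRealCondNegType ψ := by
    refine ⟨?_, ?_, ?_⟩
    · have : ∀ n, f n (1 : Γ) = 0 := fun n => by simp [hf, hone n]
      simp [hψ, this]
    · intro x
      have : ∀ n, f n x⁻¹ = f n x := fun n => by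
        simp [hf, posType_inv_conj' (hpos n) x, Complex.conj_re]
      simp [hψ, this]
    · intro n hn γ c hc
      have hsum : ∀ p : Fin n × Fin n,
          Summable (fun k : ℕ => c p.1 * c p.2 * ((k:ℝ) * f k ((γ p.1)⁻¹ * γ p.2))) :=
        fun p => (hsummable _).mul_left _
      have step1 : ∀ i j : Fin n, c i * c j * ψ ((γ i)⁻¹ * γ j)
          = ∑' k : ℕ, c i * c j * ((k:ℝ) * f k ((γ i)⁻¹ * γ j)) := fun i j => tsum_mul_left.symm
      simp only [step1]
      rw [(Finset.sum_product' (s := Finset.univ) (t := Finset.univ)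
        (f := fun i j => ∑' k : ℕ, c i * c j * ((k:ℝ) * f k ((γ i)⁻¹ * γ j)))).symm,
        ← Summable.tsum_finsetSum (fun p _ => hsum p)]
      apply tsum_nonpos
      intro k
      rw [Finset.sum_product' (s := Finset.univ) (t := Finset.univ)
        (f := fun i j => c i * c j * ((k:ℝ) * f k ((γ i)⁻¹ * γ j)))]
      have hfac : ∑ i, ∑ j, c i * c j * ((k:ℝ) * f k ((γ i)⁻¹ * γ j))
          = (k:ℝ) * ∑ i, ∑ j, c i * c j * f k ((γ i)⁻¹ * γ j) := by
        simp only [Finset.mul_sum]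
        refine Finset.sum_congr rfl fun i _ => Finset.sum_congr rfl fun j _ => by ring
      rw [hfac]
      exact mul_nonpos_iff.mpr (Or.inl ⟨Nat.cast_nonneg k, hpt k n hn γ c hc⟩)
  have hinvψ : IsInvariantUnder Δ ψ := by
    intro d0 hd0 d1 hd1 x
    exact tsum_congr fun n => by simp only [hf, hinv n d0 hd0 d1 hd1 x]
  obtain ⟨C, hC⟩ := hbdd ψ hcnd hinvψ
  obtain ⟨n, hn⟩ := exists_nat_gt (C / ε)
  have hCn : C < n * ε := (div_lt_iff₀ hε).mp hn
  have h1 : (n:ℝ) * f n (g n) ≤ ψ (g n) :=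
    Summable.le_tsum (hsummable (g n)) n (fun j _ => mul_nonneg (Nat.cast_nonneg j) (f_nonneg j _))
  have hfn : ε < f n (g n) := by
    have := hgε n
    simp only [hf, Complex.sub_re, Complex.one_re] at this ⊢
    linarith
  have h2 : (n:ℝ) * ε ≤ (n:ℝ) * f n (g n) :=
    mul_le_mul_of_nonneg_left hfn.le (Nat.cast_nonneg n)
  have h3 := hC (g n) (hgΛ n)
  have h4 : ψ (g n) ≤ |ψ (g n)| := le_abs_self _
  linarith
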